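/- For all real x in [-1,1], -x + x^2 + 1 - e^{-x} ≥ (3 - e) x^2. -/

import Mathlib

open scoped Nat

lemma exp_tsum' (t : ℝ) : Real.exp t = ∑' n : ℕ, t ^ n / n ! := by
  rw [Real.exp_eq_exp_ℝ, NormedSpace.exp_eq_tsum_div]

lemma key_ineq (t : ℝ) (ht : |t| ≤ 1) :
    Real.exp t ≤ 1 + t + (Real.exp 1 - 2) * t ^ 2 := by
  set d : ℕ → ℝ := fun n => if n = 0 then 1 - t ^ 2 else if n = 1 then t - t ^ 2 else 0 with hd
  have hdsum : Summable d := by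
    apply summable_of_ne_finset_zero (s := {0, 1})
    intro n hn
    simp only [Finset.mem_insert, Finset.mem_singleton, not_or] at hn
    simp [hd, hn.1, hn.2]
  have hdval : ∑' n, d n = (1 - t ^ 2) + (t - t ^ 2) := by
    rw [tsum_eq_sum (s := {0, 1})]
    · simp [hd]
    · intro n hn
      simp only [Finset.mem_insert, Finset.mem_singleton, not_or] at hn
      simp [hd, hn.1, hn.2]
  have h1 : Summable fun n : ℕ => t ^ n / n ! := Real.summable_pow_div_factorial t
  have h2 : Summable fun n : ℕ => t ^ 2 / n ! := by
    have := (Real.summable_pow_div_factorial 1).mul_left (t ^ 2)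
    simpa [div_eq_mul_inv] using this
  have h2val : ∑' n : ℕ, t ^ 2 / (n ! : ℝ) = t ^ 2 * Real.exp 1 := by
    have := exp_tsum' 1
    simp only [one_pow] at this
    rw [this, ← tsum_mul_left]
    congr 1; ext n; ring
  have hterm : ∀ n : ℕ, t ^ n / n ! ≤ t ^ 2 / n ! + d n := by
    intro n
    match n with
    | 0 => simp [hd]
    | 1 => simp [hd]
    | (m + 2) =>
      have h3 : t ^ (m + 2) ≤ t ^ 2 := by
        calc t ^ (m + 2) ≤ |t ^ (m + 2)| := le_abs_self _
          _ = |t| ^ (m + 2) := by rw [abs_pow]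
          _ ≤ |t| ^ 2 := pow_le_pow_of_le_one (abs_nonneg t) ht (by omega)
          _ = t ^ 2 := sq_abs t
      have : d (m + 2) = 0 := by simp [hd]
      rw [this, add_zero]
      exact div_le_div_of_nonneg_right h3 (by positivity) |>.trans_eq rfl
  have hle : Real.exp t ≤ ∑' n : ℕ, (t ^ 2 / n ! + d n) := by
    rw [exp_tsum' t]
    exact Summable.tsum_le_tsum hterm h1 (h2.add hdsum)
  have : ∑' n : ℕ, (t ^ 2 / (n ! : ℝ) + d n) = t ^ 2 * Real.exp 1 + ((1 - t ^ 2) + (t - t ^ 2)) := by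
    rw [Summable.tsum_add h2 hdsum, h2val, hdval]
  rw [this] at hle
  linarith

theorem stmt_1 (x : ℝ) (hx : x ∈ Set.Icc (-1 : ℝ) 1) :
    (3 - Real.exp 1) * x ^ 2 ≤ -x + x ^ 2 + 1 - Real.exp (-x) := by
  obtain ⟨h1, h2⟩ := hx
  have h := key_ineq (-x) (by rw [abs_le]; constructor <;> linarith)
  have hsq : (-x) ^ 2 = x ^ 2 := by ring
  rw [hsq] at h
  linarith
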